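/- Exact feasibility characterization under "box ∩ ellipsoidal" uncertainty when the ellipsoid is contained in the box: let δ_B, δ_E > 0 with δ_E ≤ δ_B. Then the set {ζ ∈ ℝⁿ : ‖ζ‖_∞ ≤ δ_B and ‖ζ‖₂ ≤ δ_E} equals {ζ ∈ ℝⁿ : ‖ζ‖₂ ≤ δ_E}, and the robust feasibility condition "for all ζ with ‖ζ‖_∞ ≤ δ_B and ‖ζ‖₂ ≤ δ_E, ((δ_E μ⁽⁰⁾ + Σ_{j=1}^n ζⱼ μ⁽ʲ⁾)ᵀ x)² ≥ τ² δ_E²" holds if and only if there exists λ ≥ 0 such that A − λ B⁽ᴱ⁾ is positive semidefinite. -/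

import Mathlib

open Matrix

noncomputable section

/-- `a j = (μ⁽ʲ⁾)ᵀ x`, the dot product of the `j`-th expected-return vector with `x`. -/
def avec (n : ℕ) (x : Fin n → ℝ) (μ : Fin (n + 1) → Fin n → ℝ) : Fin (n + 1) → ℝ :=
  fun j => μ j ⬝ᵥ x

/-- The symmetric matrix `A = a aᵀ - τ² e₀ e₀ᵀ`. -/
def Amat (n : ℕ) (x : Fin n → ℝ) (τ : ℝ) (μ : Fin (n + 1) → Fin n → ℝ) :
    Matrix (Fin (n + 1)) (Fin (n + 1)) ℝ :=
  Matrix.of fun i j =>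
    avec n x μ i * avec n x μ j - if i = 0 ∧ j = 0 then τ ^ 2 else 0

/-- The matrix `B⁽ᴱ⁾ = diag(1, -1, …, -1)`. -/
def BE (n : ℕ) : Matrix (Fin (n + 1)) (Fin (n + 1)) ℝ :=
  Matrix.diagonal fun i => if i = 0 then 1 else -1

/-- The matrix `B⁽ᴾ⁾ = e₀e₀ᵀ - J`: `(0,0)`-entry `1`, entries `-1` for `i, j ≥ 1`,
zero elsewhere. -/
def BP (n : ℕ) : Matrix (Fin (n + 1)) (Fin (n + 1)) ℝ :=
  Matrix.of fun i j =>
    if i = 0 ∧ j = 0 then 1 else if i ≠ 0 ∧ j ≠ 0 then -1 else 0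

/-- A real matrix is positive semidefinite: `zᵀ M z ≥ 0` for all `z`. -/
def IsPSD {d : ℕ} (M : Matrix (Fin d) (Fin d) ℝ) : Prop :=
  ∀ z : Fin d → ℝ, 0 ≤ z ⬝ᵥ M *ᵥ z

lemma quadform (n : ℕ) (x : Fin n → ℝ) (τ : ℝ) (μ : Fin (n + 1) → Fin n → ℝ) (lam : ℝ)
    (z : Fin (n+1) → ℝ) :
    z ⬝ᵥ (Amat n x τ μ - lam • BE n) *ᵥ z
      = (∑ j, avec n x μ j * z j)^2 - τ^2*(z 0)^2
        - lam*((z 0)^2 - ∑ j : Fin n, (z j.succ)^2) := by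
  have h1 : z ⬝ᵥ (Amat n x τ μ) *ᵥ z = (∑ j, avec n x μ j * z j)^2 - τ^2*(z 0)^2 := by
    simp only [dotProduct, mulVec, Amat, Matrix.of_apply]
    simp only [mul_sub, sub_mul, Finset.mul_sum, Finset.sum_sub_distrib]
    congr 1
    · rw [sq, Finset.sum_mul_sum]
      apply Finset.sum_congr rfl; intro i _; apply Finset.sum_congr rfl; intro j _; ring
    · simp [Fin.sum_univ_succ, Fin.succ_ne_zero, sq]
      ring
  have h2 : z ⬝ᵥ (BE n) *ᵥ z = (z 0)^2 - ∑ j : Fin n, (z j.succ)^2 := by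
    simp only [dotProduct, mulVec, BE, Matrix.diagonal_apply]
    simp only [Finset.mul_sum, Finset.sum_ite_eq', Finset.mem_univ, if_true]
    rw [Fin.sum_univ_succ]
    simp [Fin.succ_ne_zero, sq, sub_eq_add_neg]
  rw [Matrix.sub_mulVec, dotProduct_sub, h1, Matrix.smul_mulVec, dotProduct_smul, h2,
    smul_eq_mul]

lemma dotrew (n : ℕ) (x : Fin n → ℝ) (μ : Fin (n + 1) → Fin n → ℝ) (δE : ℝ) (ζ : Fin n → ℝ) :
    (δE • μ 0 + ∑ j : Fin n, ζ j • μ j.succ) ⬝ᵥ x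
      = δE * avec n x μ 0 + ∑ j : Fin n, ζ j * avec n x μ j.succ := by
  simp only [add_dotProduct, smul_dotProduct, smul_eq_mul, avec]
  congr 1
  simp only [dotProduct, Finset.sum_apply, Finset.sum_mul, Finset.mul_sum, Pi.smul_apply,
    smul_eq_mul]
  simp only [mul_assoc]
  rw [Finset.sum_comm]

set_option maxHeartbeats 2000000 in
/-- Exact feasibility characterization under "box ∩ ellipsoidal" uncertainty. -/
theorem feasibility_box_ellipsoid_exact (n : ℕ) (hn : 1 ≤ n) (x : Fin n → ℝ) (τ : ℝ)
    (μ : Fin (n + 1) → Fin n → ℝ) (δB δE : ℝ) (hδB : 0 < δB) (hδE : 0 < δE)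
    (hle : δE ≤ δB) :
    ({ζ : Fin n → ℝ | (∀ j, |ζ j| ≤ δB) ∧ Real.sqrt (∑ j, ζ j ^ 2) ≤ δE} =
      {ζ : Fin n → ℝ | Real.sqrt (∑ j, ζ j ^ 2) ≤ δE}) ∧
    ((∀ ζ : Fin n → ℝ, (∀ j, |ζ j| ≤ δB) → Real.sqrt (∑ j, ζ j ^ 2) ≤ δE →
        τ ^ 2 * δE ^ 2 ≤ ((δE • μ 0 + ∑ j : Fin n, ζ j • μ j.succ) ⬝ᵥ x) ^ 2) ↔
      ∃ lam : ℝ, 0 ≤ lam ∧ IsPSD (Amat n x τ μ - lam • BE n)) := by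
  set a : Fin (n+1) → ℝ := avec n x μ with ha
  -- box constraint is implied by the ball constraint
  have ballbox : ∀ ζ : Fin n → ℝ, Real.sqrt (∑ j, ζ j ^ 2) ≤ δE → ∀ j, |ζ j| ≤ δB := by
    intro ζ h j
    have h1 : (ζ j)^2 ≤ ∑ i, ζ i ^ 2 :=
      Finset.single_le_sum (fun i _ => sq_nonneg (ζ i)) (Finset.mem_univ j)
    calc |ζ j| = Real.sqrt ((ζ j)^2) := (Real.sqrt_sq_eq_abs _).symm
      _ ≤ Real.sqrt (∑ i, ζ i ^ 2) := Real.sqrt_le_sqrt h1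
      _ ≤ δE := h
      _ ≤ δB := hle
  constructor
  · ext ζ
    simp only [Set.mem_setOf_eq]
    exact ⟨fun h => h.2, fun h => ⟨ballbox ζ h, h⟩⟩
  constructor
  · -- forward direction: robust feasibility ⇒ ∃ λ
    intro hrob
    by_cases hτ : τ = 0
    · refine ⟨0, le_refl 0, fun z => ?_⟩
      rw [quadform]
      simp [hτ]
      positivity
    -- τ ≠ 0
    set S : ℝ := ∑ j : Fin n, (a j.succ)^2 with hSdef
    have hS : 0 ≤ S := Finset.sum_nonneg fun i _ => sq_nonneg _
    set b : ℝ := Real.sqrt S with hbdef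
    have hb : 0 ≤ b := Real.sqrt_nonneg _
    have hb2 : b^2 = S := Real.sq_sqrt hS
    set A0 : ℝ := |a 0| with hA0def
    have hA0sq : A0^2 = (a 0)^2 := sq_abs _
    have ht : 0 < |τ| := abs_pos.mpr hτ
    -- a specialized robust inequality for multiples of (a ∘ succ)
    have hspec : ∀ c : ℝ, c^2 * S ≤ δE^2 →
        τ^2 * δE^2 ≤ (δE * a 0 + c * S)^2 := by
      intro c hc
      have hsum2 : ∑ j : Fin n, (c * a j.succ)^2 = c^2 * S := by
        rw [hSdef, Finset.mul_sum]
        exact Finset.sum_congr rfl fun j _ => by ring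
      have hsq : Real.sqrt (∑ j : Fin n, (c * a j.succ)^2) ≤ δE := by
        rw [hsum2]
        exact (Real.sqrt_le_left hδE.le).mpr hc
      have := hrob (fun j => c * a j.succ) (ballbox _ hsq) hsq
      rw [dotrew] at this
      have hval : ∑ j : Fin n, (c * a j.succ) * a j.succ = c * S := by
        rw [hSdef, Finset.mul_sum]
        exact Finset.sum_congr rfl fun j _ => by ring
      rw [hval] at this
      exact this
    -- b ≤ |a 0|
    have hab : b ≤ A0 := by
      rcases eq_or_lt_of_le hS with hS0 | hSpos
      · rw [hbdef, ← hS0, Real.sqrt_zero]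
        exact abs_nonneg _
      by_contra hcon
      push_neg at hcon
      have ha0S : (a 0)^2 < S := by
        nlinarith [hA0sq, hb2, mul_self_lt_mul_self (abs_nonneg (a 0)) hcon]
      have hc : (-(δE * a 0 / S))^2 * S ≤ δE^2 := by
        rw [neg_sq, div_pow, div_mul_eq_mul_div, div_le_iff₀ (by positivity)]
        nlinarith [mul_nonneg (mul_nonneg (sq_nonneg δE) hS) (sub_nonneg.mpr ha0S.le)]
      have h0 := hspec _ hc
      have hval : δE * a 0 + (-(δE * a 0 / S)) * S = 0 := by
        field_simp
        ring
      rw [hval] at h0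
      have h0' : τ^2 * δE^2 ≤ 0 := by simpa using h0
      have hτ2 : τ^2 ≤ 0 := by nlinarith [mul_pos hδE hδE, sq_nonneg τ]
      exact hτ ((pow_eq_zero_iff (two_ne_zero)).mp (le_antisymm hτ2 (sq_nonneg τ)))
    -- the key bound |a 0| ≥ b + |τ|
    have hcle : b + |τ| ≤ A0 := by
      rcases eq_or_lt_of_le hS with hS0 | hSpos
      · have hb0 : b = 0 := by rw [hbdef, ← hS0, Real.sqrt_zero]
        have hc : (0:ℝ)^2 * S ≤ δE^2 := by nlinarith
        have h0 := hspec 0 hc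
        rw [zero_mul, add_zero] at h0
        have h1 : τ^2 ≤ (a 0)^2 := by nlinarith [mul_pos hδE hδE]
        have h2 : |τ| ≤ |a 0| := by
          rw [← Real.sqrt_sq_eq_abs τ, ← Real.sqrt_sq_eq_abs (a 0)]
          exact Real.sqrt_le_sqrt h1
        rw [hb0, hA0def]
        linarith
      have hbpos : 0 < b := Real.sqrt_pos.mpr hSpos
      set ε : ℝ := if 0 ≤ a 0 then 1 else -1 with hεdef
      have hε2 : ε^2 = 1 := by rw [hεdef]; split_ifs <;> norm_num
      have hεa : ε * a 0 = A0 := by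
        rw [hεdef, hA0def]; split_ifs with h
        · rw [abs_of_nonneg h]; ring
        · rw [abs_of_neg (lt_of_not_ge h)]; ring
      have hc : (-(δE * ε / b))^2 * S ≤ δE^2 := by
        rw [neg_sq, div_pow, div_mul_eq_mul_div, div_le_iff₀ (by positivity)]
        apply le_of_eq
        linear_combination δE^2*S*hε2 - δE^2*hb2
      have h1 := hspec _ hc
      have hval : δE * a 0 + (-(δE * ε / b)) * S = δE * (a 0 - ε * b) := by
        field_simp
        linear_combination ε * hb2
      rw [hval] at h1
      have h2 : τ^2 ≤ (a 0 - ε * b)^2 := by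
        nlinarith [h1, mul_pos hδE hδE, sq_nonneg (a 0 - ε * b)]
      have h3 : (a 0 - ε * b)^2 = (A0 - b)^2 := by
        have he : ε^2 * (a 0 - ε * b)^2 = (ε * a 0 - ε^2 * b)^2 := by ring
        rw [hε2, hεa] at he
        linarith [he]
      have h4 : |τ| ≤ |A0 - b| := by
        rw [← Real.sqrt_sq_eq_abs τ, ← Real.sqrt_sq_eq_abs (A0 - b)]
        exact Real.sqrt_le_sqrt (by linarith)
      rw [abs_of_nonneg (by linarith : (0:ℝ) ≤ A0 - b)] at h4
      linarith
    -- the explicit multiplier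
    refine ⟨b * (A0 - b), mul_nonneg hb (by linarith [abs_nonneg τ, hcle]), fun z => ?_⟩
    rw [quadform, Fin.sum_univ_succ]
    set u : ℝ := z 0 with hu
    set s : ℝ := ∑ j : Fin n, a j.succ * z j.succ with hsdef
    set T : ℝ := ∑ j : Fin n, (z j.succ)^2 with hTdef
    have hT : 0 ≤ T := Finset.sum_nonneg fun i _ => sq_nonneg _
    have hCS : s^2 ≤ S * T := by
      rw [hsdef, hSdef, hTdef]
      exact Finset.sum_mul_sq_le_sq_mul_sq Finset.univ (fun j : Fin n => a j.succ) (fun j : Fin n => z j.succ)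
    have htle : |τ| ≤ A0 - b := by linarith
    have hτsq : τ^2 ≤ (A0 - b)^2 := by
      nlinarith [mul_self_le_mul_self (abs_nonneg τ) htle, sq_abs τ]
    rcases eq_or_lt_of_le hb with hb0 | hbpos
    · -- b = 0
      have hbe : b = 0 := hb0.symm
      have hS0 : S = 0 := by rw [← hb2, hbe]; ring
      have hs2 : s^2 = 0 := le_antisymm (by nlinarith [hCS, hT]) (sq_nonneg s)
      have hs0 : s = 0 := (pow_eq_zero_iff (two_ne_zero)).mp hs2
      rw [hbe, hs0]
      rw [hbe, sub_zero] at hτsq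
      have hA0b : τ^2 ≤ (a 0)^2 := by linarith [hA0sq, hτsq]
      nlinarith [mul_nonneg (sub_nonneg.mpr hA0b) (sq_nonneg u)]
    · -- b > 0
      have hA0pos : 0 < A0 := by linarith [abs_nonneg τ, ht]
      have p1 : 0 ≤ (A0 * s + a 0 * b * u)^2 := sq_nonneg _
      have p2 : 0 ≤ b * A0 * ((A0 - b)^2 - τ^2) * u^2 :=
        mul_nonneg (mul_nonneg (mul_nonneg hb hA0pos.le) (by linarith [hτsq])) (sq_nonneg u)
      have p3 : 0 ≤ A0 * (A0 - b) * (b^2 * T - s^2) := by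
        have h1 : 0 ≤ b^2 * T - s^2 := by rw [hb2]; linarith
        have h2 : 0 ≤ A0 - b := by linarith [abs_nonneg τ, hcle]
        exact mul_nonneg (mul_nonneg hA0pos.le h2) h1
      have key : b * A0 * ((a 0 * u + s)^2 - τ^2*u^2 - (b*(A0-b))*(u^2 - T))
          = (A0 * s + a 0 * b * u)^2 + b * A0 * ((A0 - b)^2 - τ^2) * u^2
            + A0 * (A0 - b) * (b^2 * T - s^2) := by
        linear_combination (b^2*u^2 - A0*b*u^2) * hA0sq
      have hpos : 0 < b * A0 := mul_pos hbpos hA0pos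
      have h4 : (b * A0) * 0 ≤ (b * A0) *
          ((a 0 * u + s)^2 - τ^2*u^2 - (b*(A0-b))*(u^2 - T)) := by
        rw [mul_zero]
        nlinarith [key, p1, p2, p3]
      linarith [le_of_mul_le_mul_left h4 hpos]
  · -- easy direction
    rintro ⟨lam, hlam, hpsd⟩ ζ hbox hsq
    have hTle : ∑ j, ζ j ^ 2 ≤ δE^2 := (Real.sqrt_le_left hδE.le).mp hsq
    have := hpsd (Fin.cases δE ζ)
    rw [quadform] at this
    simp only [Fin.sum_univ_succ, Fin.cases_zero, Fin.cases_succ] at this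
    rw [dotrew]
    have hsum : ∑ j : Fin n, ζ j * a j.succ = ∑ j : Fin n, a j.succ * ζ j :=
      Finset.sum_congr rfl fun j _ => mul_comm _ _
    rw [hsum]
    nlinarith [this, mul_nonneg hlam (sub_nonneg.mpr hTle)]
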